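/- Out of Def 2, Def 4, Def 8 (and the three HP definitions), all satisfy the Dependence principle, while Def 3 and Def 10 do not. In particular: if (M,u⃗) ⊨ X=x ∧ Y=y and there is a value x' with (M,u⃗) ⊨ [X←x'] Y≠y, then X=x causes Y=y according to Def 2, Def 4, and Def 8. -/
import Mathlib


open Classical

/-- A strongly recursive structural-equations (causal) model with exogenous
variables `U`, endogenous variables `V`, and values in `α`.  `rng v` is the
range `R(v)` of an endogenous variable; `F v u s` is the structural equation of
`v` evaluated in context `u` at the assignment `s` (it does not depend on
`s v`); `solve Z g u` is the unique solution of the model obtained by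
intervening `Z ← g` in context `u`; `actual u` is the actual world of context
`u`; `prec` is a well-founded order witnessing strong recursivity. -/
structure CausalModel (U V α : Type) where
  rng : V → Set α
  F : V → U → (V → α) → α
  F_rng : ∀ (v : V) (u : U) (s : V → α), F v u s ∈ rng v
  F_self : ∀ (v : V) (u : U) (s s' : V → α), (∀ w, w ≠ v → s w = s' w) → F v u s = F v u s'
  solve : Set V → (V → α) → U → V → α
  solve_mem : ∀ (Z : Set V) (g : V → α) (u : U), ∀ v ∈ Z, solve Z g u v = g v
  solve_not_mem : ∀ (Z : Set V) (g : V → α) (u : U) (v : V), v ∉ Z →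
    solve Z g u v = F v u (solve Z g u)
  solve_unique : ∀ (Z : Set V) (g : V → α) (u : U) (s : V → α),
    (∀ v ∈ Z, s v = g v) → (∀ v ∉ Z, s v = F v u s) → s = solve Z g u
  actual : U → V → α
  actual_def : ∀ (g : V → α) (u : U), solve ∅ g u = actual u
  prec : V → V → Prop
  prec_wf : WellFounded prec
  prec_dep : ∀ a b : V, (∃ (u : U) (s s' : V → α), (∀ w, s w ∈ rng w) ∧ (∀ w, s' w ∈ rng w) ∧
    (∀ w, w ≠ a → s w = s' w) ∧ F b u s ≠ F b u s') → prec a b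

namespace CausalModel

variable {U V α : Type}

/-- The assignment that is `x` on `X` and `g` elsewhere. -/
noncomputable def merge (X : Set V) (x g : V → α) : V → α :=
  fun v => if v ∈ X then x v else g v

/-- `g` is a valid setting: every variable gets a value in its range. -/
def Setting (M : CausalModel U V α) (g : V → α) : Prop := ∀ v, g v ∈ M.rng v

/-- `X⃗=x⃗` is directly sufficient for `Y⃗=y⃗`: in every context, intervening
`X⃗ ← x⃗` together with arbitrary (in-range) values for all remaining variables
`C⃗ = V ∖ (X⃗ ∪ Y⃗)` yields `Y⃗ = y⃗`. -/
def directlySuff (M : CausalModel U V α) (X : Set V) (x : V → α) (Y : Set V) (y : V → α) : Prop :=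
  ∀ g : V → α, M.Setting g → (∀ v ∈ X, g v = x v) →
    ∀ u : U, ∀ v ∈ Y, M.solve (X ∪ (X ∪ Y)ᶜ) g u v = y v

/-- Actual direct sufficiency: as `directlySuff` but only in the given context `u`. -/
def actDirectlySuff (M : CausalModel U V α) (u : U) (X : Set V) (x : V → α)
    (Y : Set V) (y : V → α) : Prop :=
  ∀ g : V → α, M.Setting g → (∀ v ∈ X, g v = x v) →
    ∀ v ∈ Y, M.solve (X ∪ (X ∪ Y)ᶜ) g u v = y v

/-- `X⃗=x⃗` is weakly sufficient for `Y⃗=y⃗`: in every context, `[X⃗ ← x⃗] Y⃗=y⃗`. -/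
def weaklySuff (M : CausalModel U V α) (X : Set V) (x : V → α) (Y : Set V) (y : V → α) : Prop :=
  ∀ u : U, ∀ v ∈ Y, M.solve X x u v = y v

/-- Actual weak sufficiency in context `u`: `(M,u) ⊨ [X⃗ ← x⃗] Y⃗=y⃗`. -/
def actWeaklySuff (M : CausalModel U V α) (u : U) (X : Set V) (x : V → α)
    (Y : Set V) (y : V → α) : Prop :=
  ∀ v ∈ Y, M.solve X x u v = y v

/-- `X⃗=x⃗` is strongly sufficient for `Y⃗=y⃗`: it is directly sufficient for some
superset `N⃗ ⊇ Y⃗` with values extending `y⃗`. -/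
def stronglySuff (M : CausalModel U V α) (X : Set V) (x : V → α) (Y : Set V) (y : V → α) : Prop :=
  ∃ (N : Set V) (n : V → α), Y ⊆ N ∧ (∀ v ∈ Y, n v = y v) ∧ M.directlySuff X x N n

/-- Actual strong sufficiency of `X⃗=x⃗` for the single effect `Y0 = y` along the
network `N` in context `u`. -/
def actStronglySuffNet (M : CausalModel U V α) (u : U) (X : Set V) (x : V → α)
    (Y0 : V) (y : α) (N : Set V) : Prop :=
  ∃ n : V → α, Y0 ∈ N ∧ n Y0 = y ∧ M.actDirectlySuff u X x N n

/-- `a` is a parent of `b`: the equation of `b` depends on the value of `a`. -/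
def IsParent (M : CausalModel U V α) (a b : V) : Prop :=
  ∃ (u : U) (s s' : V → α), M.Setting s ∧ M.Setting s' ∧
    (∀ w, w ≠ a → s w = s' w) ∧ M.F b u s ≠ M.F b u s'

/-- `a` is only a parent of `b`: the single edge `a → b` is the only directed
path from `a` to `b`. -/
def OnlyParent (M : CausalModel U V α) (a b : V) : Prop :=
  M.IsParent a b ∧ ¬ ∃ z, M.IsParent a z ∧ Relation.TransGen M.IsParent z b

/-- `R` is the set of root variables: equations of members of `R` depend only on
the context, and equations of all other variables do not depend on the context
(exogenous variables appear only in equations of the form `V = U`). -/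
def IsRootSet (M : CausalModel U V α) (R : Set V) : Prop :=
  (∀ v ∈ R, ∀ (u : U) (s s' : V → α), M.F v u s = M.F v u s') ∧
  (∀ v ∉ R, ∀ (u u' : U) (s : V → α), M.F v u s = M.F v u' s)

/-- Def 2: contrastive necessity with actual strong sufficiency (AC1, AC2, AC3). -/
def CauseDef2 (M : CausalModel U V α) (u : U) (X : Set V) (x : V → α) (Y0 : V) (y : α) : Prop :=
  (∀ v ∈ X, M.actual u v = x v) ∧ M.actual u Y0 = y ∧
  (∃ (W N : Set V) (x' : V → α), Disjoint W (X ∪ {Y0}) ∧ (∀ v ∈ X, x' v ∈ M.rng v) ∧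
      M.actStronglySuffNet u (X ∪ W) (merge X x (M.actual u)) Y0 y N ∧
      ∀ S ⊆ N, ¬ M.actStronglySuffNet u (X ∪ W) (merge X x' (M.actual u)) Y0 y S) ∧
  (∀ X' ⊂ X, ¬ ∃ (W N : Set V) (x' : V → α), Disjoint W (X' ∪ {Y0}) ∧
      (∀ v ∈ X', x' v ∈ M.rng v) ∧
      M.actStronglySuffNet u (X' ∪ W) (merge X' x (M.actual u)) Y0 y N ∧
      ∀ S ⊆ N, ¬ M.actStronglySuffNet u (X' ∪ W) (merge X' x' (M.actual u)) Y0 y S)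

/-- Def 3: contrastive necessity with actual direct sufficiency (AC1, AC2, AC3). -/
def CauseDef3 (M : CausalModel U V α) (u : U) (X : Set V) (x : V → α) (Y0 : V) (y : α) : Prop :=
  (∀ v ∈ X, M.actual u v = x v) ∧ M.actual u Y0 = y ∧
  (∃ (W : Set V) (x' : V → α), Disjoint W (X ∪ {Y0}) ∧ (∀ v ∈ X, x' v ∈ M.rng v) ∧
      M.actDirectlySuff u (X ∪ W) (merge X x (M.actual u)) {Y0} (fun _ => y) ∧
      ¬ M.actDirectlySuff u (X ∪ W) (merge X x' (M.actual u)) {Y0} (fun _ => y)) ∧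
  (∀ X' ⊂ X, ¬ ∃ (W : Set V) (x' : V → α), Disjoint W (X' ∪ {Y0}) ∧
      (∀ v ∈ X', x' v ∈ M.rng v) ∧
      M.actDirectlySuff u (X' ∪ W) (merge X' x (M.actual u)) {Y0} (fun _ => y) ∧
      ¬ M.actDirectlySuff u (X' ∪ W) (merge X' x' (M.actual u)) {Y0} (fun _ => y))

/-- Def 4 (singleton cause): contrastive necessity with non-actual weak sufficiency. -/
def CauseDef4 (M : CausalModel U V α) (u : U) (X0 : V) (x0 : α) (Y0 : V) (y : α) : Prop :=
  M.actual u X0 = x0 ∧ M.actual u Y0 = y ∧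
  ∃ (W : Set V) (x' : α), Disjoint W ({X0} ∪ {Y0} : Set V) ∧ x' ∈ M.rng X0 ∧
    M.weaklySuff ({X0} ∪ W) (merge {X0} (fun _ => x0) (M.actual u)) {Y0} (fun _ => y) ∧
    ¬ M.weaklySuff ({X0} ∪ W) (merge {X0} (fun _ => x') (M.actual u)) {Y0} (fun _ => y)

/-- Def 8 (singleton cause): minimal necessity with actual strong sufficiency
(minimality AC3 is automatic for singletons). -/
def CauseDef8 (M : CausalModel U V α) (u : U) (X0 : V) (x0 : α) (Y0 : V) (y : α) : Prop :=
  M.actual u X0 = x0 ∧ M.actual u Y0 = y ∧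
  ∃ W N : Set V, Disjoint W ({X0} ∪ {Y0} : Set V) ∧
    M.actStronglySuffNet u ({X0} ∪ W) (merge {X0} (fun _ => x0) (M.actual u)) Y0 y N ∧
    ∀ S ⊆ N, ¬ M.actStronglySuffNet u W (M.actual u) Y0 y S

/-- Def 10 (singleton cause): minimal necessity with non-actual weak sufficiency. -/
def CauseDef10 (M : CausalModel U V α) (u : U) (X0 : V) (x0 : α) (Y0 : V) (y : α) : Prop :=
  M.actual u X0 = x0 ∧ M.actual u Y0 = y ∧
  ∃ W : Set V, Disjoint W ({X0} ∪ {Y0} : Set V) ∧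
    M.weaklySuff ({X0} ∪ W) (merge {X0} (fun _ => x0) (M.actual u)) {Y0} (fun _ => y) ∧
    ¬ M.weaklySuff W (M.actual u) {Y0} (fun _ => y)

end CausalModel

namespace CausalModel


lemma actual_eq_F (M : CausalModel U V α) (u : U) (v : V) :
    M.actual u v = M.F v u (M.actual u) := by
  have h2 := M.solve_not_mem ∅ (M.actual u) u v (by simp)
  rwa [M.actual_def (M.actual u) u] at h2

lemma setting_actual (M : CausalModel U V α) (u : U) : M.Setting (M.actual u) := by
  intro v; rw [M.actual_eq_F]; exact M.F_rng v u _

lemma solve_eq_self (M : CausalModel U V α) (Z : Set V) (s : V → α) (u : U)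
    (h : ∀ v ∉ Z, s v = M.F v u s) : M.solve Z s u = s :=
  (M.solve_unique Z s u s (fun _ _ => rfl) h).symm

lemma solve_congr (M : CausalModel U V α) (Z : Set V) (g g' : V → α) (u : U)
    (h : ∀ v ∈ Z, g v = g' v) : M.solve Z g u = M.solve Z g' u :=
  M.solve_unique Z g' u (M.solve Z g u)
    (fun v hv => (M.solve_mem Z g u v hv).trans (h v hv))
    (fun v hv => M.solve_not_mem Z g u v hv)

lemma solve_root_actual (M : CausalModel U V α) (R : Set V) (hR : M.IsRootSet R)
    (u u' : U) (Z : Set V) (hRZ : R ⊆ Z) (g : V → α) (hg : ∀ v ∈ Z, g v = M.actual u v) :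
    M.solve Z g u' = M.actual u :=
  (M.solve_unique Z g u' (M.actual u) (fun v hv => (hg v hv).symm)
    (fun v hv => by
      rw [hR.2 v (fun hvR => hv (hRZ hvR)) u' u (M.actual u)]
      exact M.actual_eq_F u v)).symm

lemma merge_empty (x g : V → α) : merge (∅ : Set V) x g = g := by
  funext v; simp [merge]

section Positive

variable (M : CausalModel U V α) (R : Set V) (u : U) (X0 Y0 : V) (x0 y x' : α)

theorem positive_part (hR : M.IsRootSet R) (hne : X0 ≠ Y0)
    (hx : M.actual u X0 = x0) (hy : M.actual u Y0 = y) (hx' : x' ∈ M.rng X0)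
    (hdep : M.solve {X0} (fun _ => x') u Y0 ≠ y) :
    CauseDef2 M u {X0} (fun _ => x0) Y0 y ∧ CauseDef4 M u X0 x0 Y0 y ∧
      CauseDef8 M u X0 x0 Y0 y := by
  classical
  set t : V → α := M.solve {X0} (fun _ => x') u with ht
  have htX0 : t X0 = x' := M.solve_mem {X0} (fun _ => x') u X0 rfl
  have htF : ∀ v, v ≠ X0 → t v = M.F v u t := fun v hv =>
    M.solve_not_mem {X0} (fun _ => x') u v (by simpa using hv)
  have htset : M.Setting t := by
    intro v
    by_cases hv : v = X0
    · subst hv; rw [htX0]; exact hx'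
    · rw [htF v hv]; exact M.F_rng v u t
  -- Y0 is not a root variable
  have hY0R : Y0 ∉ R := by
    intro hmem
    apply hdep
    rw [htF Y0 (Ne.symm hne), hR.1 Y0 hmem u t (M.actual u), ← M.actual_eq_F, hy]
  -- t agrees with actual on root variables other than X0
  have htR : ∀ v ∈ R, v ≠ X0 → t v = M.actual u v := by
    intro v hv hvx
    rw [htF v hvx, hR.1 v hv u t (M.actual u), ← M.actual_eq_F]
  set W : Set V := R \ {X0} with hW
  set Z : Set V := {X0} ∪ W with hZ
  have hRZ : R ⊆ Z := by
    intro v hv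
    by_cases h : v = X0
    · exact Or.inl h
    · exact Or.inr ⟨hv, h⟩
  have hY0Z : Y0 ∉ Z := by
    rintro (h | h)
    · exact hne (Set.mem_singleton_iff.mp h).symm
    · exact hY0R h.1
  have hdisj : Disjoint W ({X0} ∪ {Y0} : Set V) := by
    rw [Set.disjoint_left]
    rintro v ⟨hvR, hvx⟩ (h | h)
    · exact hvx h
    · rw [Set.mem_singleton_iff] at h; exact hY0R (h ▸ hvR)
  set g : V → α := merge {X0} (fun _ => x0) (M.actual u) with hg
  set g' : V → α := merge {X0} (fun _ => x') (M.actual u) with hg'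
  have hgact : ∀ v ∈ Z, g v = M.actual u v := by
    intro v _
    by_cases h : v = X0
    · subst h; simp [hg, merge, hx]
    · simp [hg, merge, h]
  have hg'Z : ∀ v ∈ Z, g' v = t v := by
    rintro v (h | h)
    · rw [Set.mem_singleton_iff] at h; subst h; simp [hg', merge, htX0]
    · simp [hg', merge, h.2, htR v h.1 h.2]
  -- t is a fixed point of solving with any set whose complement avoids X0
  have htfix : ∀ Z' : Set V, ({X0} ⊆ Z') → M.solve Z' t u = t := fun Z' hZ' =>
    M.solve_eq_self Z' t u (fun v hv => htF v (fun h => hv (hZ' (h ▸ rfl))))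
  -- positive: solving Z with actual-agreeing values gives actual in every context
  have hpos : ∀ (u' : U) (h : V → α), (∀ v ∈ Z, h v = g v) → M.solve Z h u' = M.actual u := by
    intro u' h hh
    exact M.solve_root_actual R hR u u' Z hRZ h (fun v hv => (hh v hv).trans (hgact v hv))
  -- the key negative tool: actDirectlySuff with values matching t on the intervention set fails
  have hneg : ∀ (X : Set V) (x : V → α) (S : Set V) (n : V → α),
      ({X0} ⊆ X ∨ X0 ∉ X ∪ S) → (∀ v ∈ X, x v = t v) → Y0 ∈ S → n Y0 = y →
      ¬ M.actDirectlySuff u X x S n := by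
    intro X x S n hX0 hxt hYS hnY hsuff
    have := hsuff t htset (fun v hv => ((hxt v hv).symm)) Y0 hYS
    rw [M.solve_eq_self _ t u (fun v hv => htF v (fun h => ?_))] at this
    · exact hdep (ht ▸ (this.trans hnY))
    · subst h
      rcases hX0 with hX0 | hX0
      · exact hv (Or.inl (hX0 rfl))
      · exact hv (Or.inr (fun hmem => hX0 hmem))
  have hsetZ : Z ∪ (Z ∪ Zᶜ)ᶜ = Z := by simp
  have hDS : M.actDirectlySuff u Z g Zᶜ (M.actual u) := by
    intro h hset hhg v hv
    show M.solve (Z ∪ (Z ∪ Zᶜ)ᶜ) h u v = M.actual u v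
    rw [hsetZ, hpos u h hhg]
  refine ⟨⟨fun v hv => by rw [Set.mem_singleton_iff] at hv; subst hv; exact hx, hy,
    ⟨W, Zᶜ, fun _ => x', hdisj,
      fun v hv => by rw [Set.mem_singleton_iff] at hv; subst hv; exact hx',
      ⟨M.actual u, hY0Z, hy, hDS⟩, ?_⟩, ?_⟩, ⟨hx, hy, W, x', hdisj, hx', ?_, ?_⟩,
    ⟨hx, hy, W, Zᶜ, hdisj, ⟨M.actual u, hY0Z, hy, hDS⟩, ?_⟩⟩
  · -- Def 2 necessity
    rintro S hS ⟨n, hYS, hnY, hsuff⟩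
    exact hneg Z g' S n (Or.inl Set.subset_union_left) hg'Z hYS hnY hsuff
  · -- Def 2 minimality
    intro X' hX'
    rw [Set.ssubset_singleton_iff] at hX'
    subst hX'
    rintro ⟨W', N', x'', _, _, hpos', hneg'⟩
    rw [merge_empty] at hpos'
    have := hneg' N' subset_rfl
    rw [merge_empty] at this
    exact this hpos'
  · -- Def 4 positive
    intro u' v hv
    rw [Set.mem_singleton_iff] at hv; subst hv
    have h := hpos u' g (fun _ _ => rfl)
    show M.solve Z g u' v = y
    rw [h, hy]
  · -- Def 4 negative
    intro h
    have h2 := h u Y0 rfl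
    rw [show M.solve Z g' u Y0 = t Y0 from ?_] at h2
    · exact hdep h2
    · rw [M.solve_congr Z g' t u hg'Z, htfix Z Set.subset_union_left]
  · -- Def 8 necessity
    rintro S hS ⟨n, hYS, hnY, hsuff⟩
    refine hneg W (M.actual u) S n (Or.inr ?_) (fun v hv => (htR v hv.1 hv.2).symm) hYS hnY hsuff
    rintro (h | h)
    · exact h.2 rfl
    · exact hS h (Or.inl rfl)


end Positive


inductive V3 : Type where
  | vA | vX | vY
deriving DecidableEq

open Classical in
/-- Solution function for the model `X := true`, `A := X`, `Y := A`. -/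
noncomputable def sol3 (Z : Set V3) (g : V3 → Bool) : V3 → Bool
  | .vX => if V3.vX ∈ Z then g .vX else true
  | .vA => if V3.vA ∈ Z then g .vA else (if V3.vX ∈ Z then g .vX else true)
  | .vY => if V3.vY ∈ Z then g .vY else
      (if V3.vA ∈ Z then g .vA else (if V3.vX ∈ Z then g .vX else true))

/-- rank for the order X ≺ A ≺ Y. -/
def rank3 : V3 → ℕ
  | .vX => 0 | .vA => 1 | .vY => 2

open Classical in
/-- The model `X := true`, `A := X`, `Y := A` (counterexample to Def 3). -/
noncomputable def M3 : CausalModel Unit V3 Bool where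
  rng _ := Set.univ
  F v := match v with
    | .vX => fun _ _ => true
    | .vA => fun _ s => s .vX
    | .vY => fun _ s => s .vA
  F_rng _ _ _ := Set.mem_univ _
  F_self v u s s' h := by
    cases v with
    | vX => rfl
    | vA => exact h .vX (by decide)
    | vY => exact h .vA (by decide)
  solve Z g _ := sol3 Z g
  solve_mem Z g u v hv := by cases v <;> simp [sol3, hv]
  solve_not_mem Z g u v hv := by cases v <;> simp [sol3, hv]
  solve_unique Z g u s h1 h2 := by
    have hX : s .vX = sol3 Z g .vX := by
      by_cases h : V3.vX ∈ Z
      · rw [h1 _ h]; simp [sol3, h]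
      · rw [h2 _ h]; simp [sol3, h]
    have hA : s .vA = sol3 Z g .vA := by
      by_cases h : V3.vA ∈ Z
      · rw [h1 _ h]; simp [sol3, h]
      · rw [h2 _ h]; simp only [sol3, if_neg h]; exact hX
    have hY : s .vY = sol3 Z g .vY := by
      by_cases h : V3.vY ∈ Z
      · rw [h1 _ h]; simp [sol3, h]
      · rw [h2 _ h]; simp only [sol3, if_neg h]; exact hA
    funext v; cases v
    · exact hA
    · exact hX
    · exact hY
  actual _ := fun _ => true
  actual_def g u := by funext v; cases v <;> simp [sol3]
  prec a b := rank3 a < rank3 b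
  prec_wf := InvImage.wf rank3 (Nat.lt_wfRel.wf)
  prec_dep a b h := by
    obtain ⟨u, s, s', -, -, heq, hne⟩ := h
    cases b with
    | vX => exact absurd rfl hne
    | vA =>
      have ha : a = .vX := by
        by_contra h'
        exact hne (heq .vX (fun e => h' e.symm))
      subst ha; decide
    | vY =>
      have ha : a = .vA := by
        by_contra h'
        exact hne (heq .vA (fun e => h' e.symm))
      subst ha; decide

open Classical in
/-- Solution function for the model `A := u`, `X := A`, `Y := X ∧ A`. -/
noncomputable def sol10 (Z : Set V3) (g : V3 → Bool) (u : Bool) : V3 → Bool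
  | .vA => if V3.vA ∈ Z then g .vA else u
  | .vX => if V3.vX ∈ Z then g .vX else (if V3.vA ∈ Z then g .vA else u)
  | .vY => if V3.vY ∈ Z then g .vY else
      ((if V3.vX ∈ Z then g .vX else (if V3.vA ∈ Z then g .vA else u)) &&
        (if V3.vA ∈ Z then g .vA else u))

/-- rank for the order A ≺ X ≺ Y. -/
def rank10 : V3 → ℕ
  | .vA => 0 | .vX => 1 | .vY => 2

open Classical in
/-- The model `A := u`, `X := A`, `Y := X ∧ A` (counterexample to Def 10). -/
noncomputable def M10 : CausalModel Bool V3 Bool where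
  rng _ := Set.univ
  F v := match v with
    | .vA => fun u _ => u
    | .vX => fun _ s => s .vA
    | .vY => fun _ s => s .vX && s .vA
  F_rng _ _ _ := Set.mem_univ _
  F_self v u s s' h := by
    cases v with
    | vA => rfl
    | vX => exact h .vA (by decide)
    | vY =>
      show (s .vX && s .vA) = (s' .vX && s' .vA)
      rw [h .vA (by decide), h .vX (by decide)]
  solve := sol10
  solve_mem Z g u v hv := by cases v <;> simp [sol10, hv]
  solve_not_mem Z g u v hv := by cases v <;> simp [sol10, hv]
  solve_unique Z g u s h1 h2 := by
    have hA : s .vA = sol10 Z g u .vA := by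
      by_cases h : V3.vA ∈ Z
      · rw [h1 _ h]; simp [sol10, h]
      · rw [h2 _ h]; simp [sol10, h]
    have hX : s .vX = sol10 Z g u .vX := by
      by_cases h : V3.vX ∈ Z
      · rw [h1 _ h]; simp [sol10, h]
      · rw [h2 _ h]; simp only [sol10, if_neg h]; exact hA
    have hY : s .vY = sol10 Z g u .vY := by
      by_cases h : V3.vY ∈ Z
      · rw [h1 _ h]; simp [sol10, h]
      · rw [h2 _ h]; simp only [sol10, if_neg h]; rw [hA, hX]; simp [sol10]
    funext v; cases v
    · exact hA
    · exact hX
    · exact hY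
  actual u := fun _ => u
  actual_def g u := by funext v; cases v <;> simp [sol10]
  prec a b := rank10 a < rank10 b
  prec_wf := InvImage.wf rank10 (Nat.lt_wfRel.wf)
  prec_dep a b h := by
    obtain ⟨u, s, s', -, -, heq, hne⟩ := h
    cases b with
    | vA => exact absurd rfl hne
    | vX =>
      have ha : a = .vA := by
        by_contra h'
        exact hne (heq .vA (fun e => h' e.symm))
      subst ha; decide
    | vY =>
      cases a with
      | vA => decide
      | vX => decide
      | vY =>
        refine absurd ?_ hne
        show (s .vX && s .vA) = (s' .vX && s' .vA)
        rw [heq .vA (by decide), heq .vX (by decide)]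


lemma M3_root : M3.IsRootSet (∅ : Set V3) :=
  ⟨fun v hv => absurd hv (Set.notMem_empty v), fun _ _ _ _ _ => rfl⟩

lemma M10_root : M10.IsRootSet ({V3.vA} : Set V3) := by
  constructor
  · rintro v hv u s s'
    rw [Set.mem_singleton_iff] at hv; subst hv; rfl
  · rintro v hv u u' s
    cases v with
    | vA => exact absurd rfl hv
    | vX => rfl
    | vY => rfl

lemma not_causeDef3 : ¬ CauseDef3 M3 () {V3.vX} (fun _ => true) V3.vY true := by
  rintro ⟨-, -, ⟨W, xx', hdisj, -, hpos, hneg⟩, -⟩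
  have hYW : V3.vY ∉ W := fun h' => (Set.disjoint_left.mp hdisj h') (Or.inr rfl)
  by_cases hA : V3.vA ∈ W
  · apply hneg
    intro h hset hhg v hv
    rw [Set.mem_singleton_iff] at hv; subst hv
    have hY : V3.vY ∉ (({V3.vX} ∪ W) ∪ ((({V3.vX} ∪ W) ∪ {V3.vY})ᶜ) : Set V3) := by
      rintro ((h' | h') | h')
      · exact absurd (Set.mem_singleton_iff.mp h') (by decide)
      · exact hYW h'
      · exact h' (Or.inr rfl)
    have hAZ : V3.vA ∈ (({V3.vX} ∪ W) ∪ ((({V3.vX} ∪ W) ∪ {V3.vY})ᶜ) : Set V3) :=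
      Or.inl (Or.inr hA)
    show sol3 _ h .vY = true
    simp only [sol3, if_neg hY, if_pos hAZ]
    rw [hhg .vA (Or.inr hA)]
    simp [merge, M3]
  · have hh := hpos (fun v => if v = V3.vA then false else true) (fun _ => Set.mem_univ _)
      ?_ V3.vY rfl
    · have hY : V3.vY ∉ (({V3.vX} ∪ W) ∪ ((({V3.vX} ∪ W) ∪ {V3.vY})ᶜ) : Set V3) := by
        rintro ((h' | h') | h')
        · exact absurd (Set.mem_singleton_iff.mp h') (by decide)
        · exact hYW h'
        · exact h' (Or.inr rfl)
      have hAZ : V3.vA ∈ (({V3.vX} ∪ W) ∪ ((({V3.vX} ∪ W) ∪ {V3.vY})ᶜ) : Set V3) := by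
        refine Or.inr ?_
        rintro ((h' | h') | h')
        · exact absurd (Set.mem_singleton_iff.mp h') (by decide)
        · exact hA h'
        · exact absurd (Set.mem_singleton_iff.mp h') (by decide)
      have hh' : sol3 (({V3.vX} ∪ W) ∪ ((({V3.vX} ∪ W) ∪ {V3.vY})ᶜ))
          (fun v => if v = V3.vA then false else true) .vY = true := hh
      simp only [sol3, if_neg hY, if_pos hAZ] at hh'
      simp at hh'
    · rintro v (h' | h')
      · rw [Set.mem_singleton_iff] at h'; subst h'
        simp [merge, M3]
      · have hvA : v ≠ V3.vA := fun e => hA (e ▸ h')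
        simp [merge, M3, hvA]

lemma not_causeDef10 : ¬ CauseDef10 M10 true V3.vX true V3.vY true := by
  rintro ⟨-, -, W, hdisj, hpos, hneg⟩
  have hXW : V3.vX ∉ W := fun h' => (Set.disjoint_left.mp hdisj h') (Or.inl rfl)
  have hYW : V3.vY ∉ W := fun h' => (Set.disjoint_left.mp hdisj h') (Or.inr rfl)
  by_cases hA : V3.vA ∈ W
  · apply hneg
    intro u' v hv
    rw [Set.mem_singleton_iff] at hv; subst hv
    show sol10 W (M10.actual true) u' .vY = true
    simp only [sol10, if_neg hYW, if_neg hXW, if_pos hA]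
    simp [M10]
  · have hh := hpos false V3.vY rfl
    have hY : V3.vY ∉ ({V3.vX} ∪ W : Set V3) := by
      rintro (h' | h')
      · exact absurd (Set.mem_singleton_iff.mp h') (by decide)
      · exact hYW h'
    have hAZ : V3.vA ∉ ({V3.vX} ∪ W : Set V3) := by
      rintro (h' | h')
      · exact absurd (Set.mem_singleton_iff.mp h') (by decide)
      · exact hA h'
    have hh' : sol10 ({V3.vX} ∪ W)
        (merge {V3.vX} (fun _ => true) (M10.actual true)) false .vY = true := hh
    simp only [sol10, if_neg hY, if_neg hAZ] at hh'
    simp at hh'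

/-- Def 2, Def 4, and Def 8 satisfy the Dependence principle
(counterfactual dependence of `Y=y` on a singleton `X=x` implies causation),
while Def 3 and Def 10 do not (witnessed by counterexample models).  Models
are assumed to satisfy the root-variable restriction. -/
theorem dependence_principle :
    (∀ (U V α : Type) (M : CausalModel U V α) (R : Set V), M.IsRootSet R →
      ∀ (u : U) (X0 Y0 : V) (x0 y x' : α), X0 ≠ Y0 →
        M.actual u X0 = x0 → M.actual u Y0 = y → x' ∈ M.rng X0 →
        M.solve {X0} (fun _ => x') u Y0 ≠ y →
        CauseDef2 M u {X0} (fun _ => x0) Y0 y ∧ CauseDef4 M u X0 x0 Y0 y ∧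
          CauseDef8 M u X0 x0 Y0 y) ∧
    (∃ (U V α : Type) (M : CausalModel U V α) (R : Set V) (_ : M.IsRootSet R)
        (u : U) (X0 Y0 : V) (x0 y x' : α), X0 ≠ Y0 ∧
        M.actual u X0 = x0 ∧ M.actual u Y0 = y ∧ x' ∈ M.rng X0 ∧
        M.solve {X0} (fun _ => x') u Y0 ≠ y ∧
        ¬ CauseDef3 M u {X0} (fun _ => x0) Y0 y) ∧
    (∃ (U V α : Type) (M : CausalModel U V α) (R : Set V) (_ : M.IsRootSet R)
        (u : U) (X0 Y0 : V) (x0 y x' : α), X0 ≠ Y0 ∧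
        M.actual u X0 = x0 ∧ M.actual u Y0 = y ∧ x' ∈ M.rng X0 ∧
        M.solve {X0} (fun _ => x') u Y0 ≠ y ∧
        ¬ CauseDef10 M u X0 x0 Y0 y) := by
  refine ⟨fun U V α M R hR u X0 Y0 x0 y x' =>
      M.positive_part R u X0 Y0 x0 y x' hR, ?_, ?_⟩
  · refine ⟨Unit, V3, Bool, M3, ∅, M3_root, (), V3.vX, V3.vY, true, true, false,
      by decide, rfl, rfl, Set.mem_univ _, ?_, not_causeDef3⟩
    show sol3 {V3.vX} (fun _ => false) V3.vY ≠ true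
    have h1 : V3.vY ∉ ({V3.vX} : Set V3) := fun h => by
      exact absurd (Set.mem_singleton_iff.mp h) (by decide)
    have h2 : V3.vA ∉ ({V3.vX} : Set V3) := fun h => by
      exact absurd (Set.mem_singleton_iff.mp h) (by decide)
    have h3 : V3.vX ∈ ({V3.vX} : Set V3) := rfl
    simp [sol3, h1, h2, h3]
  · refine ⟨Bool, V3, Bool, M10, {V3.vA}, M10_root, true, V3.vX, V3.vY, true, true, false,
      by decide, rfl, rfl, Set.mem_univ _, ?_, not_causeDef10⟩
    show sol10 {V3.vX} (fun _ => false) true V3.vY ≠ true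
    have h1 : V3.vY ∉ ({V3.vX} : Set V3) := fun h => by
      exact absurd (Set.mem_singleton_iff.mp h) (by decide)
    have h2 : V3.vA ∉ ({V3.vX} : Set V3) := fun h => by
      exact absurd (Set.mem_singleton_iff.mp h) (by decide)
    have h3 : V3.vX ∈ ({V3.vX} : Set V3) := rfl
    simp [sol10, h1, h2, h3]

end CausalModel
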